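/- Let G be a graph and P, P' two distinct regular profiles in G. If (A,B) is a separation of finite order that distinguishes P and P' efficiently, then (A,B) is tight. -/

import Mathlib

/-- A separation of a graph `G`: a pair of vertex sets covering `V` with no edge
between `A ∖ B` and `B ∖ A`. -/
structure GraphSep {V : Type} (G : SimpleGraph V) where
  A : Set V
  B : Set V
  union_eq : A ∪ B = Set.univ
  no_edge : ∀ a ∈ A \ B, ∀ b ∈ B \ A, ¬ G.Adj a b

namespace GraphSep

variable {V V' : Type} {G : SimpleGraph V} {G' : SimpleGraph V'}

/-- The inverse `(B,A)` of a separation `(A,B)`. -/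
def inv (s : GraphSep G) : GraphSep G where
  A := s.B
  B := s.A
  union_eq := by rw [Set.union_comm]; exact s.union_eq
  no_edge := fun a ha b hb h => s.no_edge b hb a ha h.symm

/-- The separator `A ∩ B`. -/
def sepSet (s : GraphSep G) : Set V := s.A ∩ s.B

/-- The order `|A ∩ B|` of a separation, as an extended natural number. -/
noncomputable def order (s : GraphSep G) : ℕ∞ := (s.A ∩ s.B).encard

/-- `(A,B) ≤ (C,D)` iff `A ⊆ C` and `D ⊆ B`. -/
protected def le (s t : GraphSep G) : Prop := s.A ⊆ t.A ∧ t.B ⊆ s.B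

/-- Two separations are nested if after possibly replacing either by its inverse
they are `≤`-comparable. -/
def Nested (s t : GraphSep G) : Prop :=
  s.le t ∨ s.le t.inv ∨ s.inv.le t ∨ s.inv.le t.inv

lemma mem_A_or_B (s : GraphSep G) (x : V) : x ∈ s.A ∨ x ∈ s.B := by
  have h : x ∈ s.A ∪ s.B := by rw [s.union_eq]; exact Set.mem_univ x
  exact (Set.mem_union _ _ _).1 h

/-- The join `(A,B) ∨ (C,D) = (A ∪ C, B ∩ D)`. -/
def join (s t : GraphSep G) : GraphSep G where
  A := s.A ∪ t.A
  B := s.B ∩ t.B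
  union_eq := by
    apply Set.eq_univ_of_forall
    intro x
    rcases s.mem_A_or_B x with h1 | h1
    · exact Or.inl (Or.inl h1)
    · rcases t.mem_A_or_B x with h2 | h2
      · exact Or.inl (Or.inr h2)
      · exact Or.inr ⟨h1, h2⟩
  no_edge := by
    rintro a ⟨haA, haB⟩ b ⟨hbB, hbA⟩ hadj
    by_cases hsB : a ∈ s.B
    · have hatB : a ∉ t.B := fun h => haB ⟨hsB, h⟩
      have hatA : a ∈ t.A := (t.mem_A_or_B a).resolve_right hatB
      exact t.no_edge a ⟨hatA, hatB⟩ b ⟨hbB.2, fun h => hbA (Or.inr h)⟩ hadj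
    · have hasA : a ∈ s.A := (s.mem_A_or_B a).resolve_right hsB
      exact s.no_edge a ⟨hasA, hsB⟩ b ⟨hbB.1, fun h => hbA (Or.inl h)⟩ hadj

/-- The image of a separation under a graph isomorphism. -/
def map (φ : G ≃g G') (s : GraphSep G) : GraphSep G' where
  A := ⇑φ '' s.A
  B := ⇑φ '' s.B
  union_eq := by
    apply Set.eq_univ_of_forall
    intro y
    rcases s.mem_A_or_B (φ.symm y) with h | h
    · exact Or.inl ⟨φ.symm y, h, φ.apply_symm_apply y⟩
    · exact Or.inr ⟨φ.symm y, h, φ.apply_symm_apply y⟩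
  no_edge := by
    rintro a ⟨⟨x, hxA, rfl⟩, haB⟩ b ⟨⟨y, hyB, rfl⟩, hbA⟩ hadj
    exact s.no_edge x ⟨hxA, fun h => haB ⟨x, h, rfl⟩⟩ y ⟨hyB, fun h => hbA ⟨y, h, rfl⟩⟩
      (φ.map_adj_iff.mp hadj)

/-- The neighbourhood of a set of vertices. -/
def nbhd (G : SimpleGraph V) (X : Set V) : Set V := {v | v ∉ X ∧ ∃ x ∈ X, G.Adj v x}

/-- `w` can be reached from `v` by a walk avoiding `X`. -/
def AvoidReach (G : SimpleGraph V) (X : Set V) (v w : V) : Prop :=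
  ∃ p : G.Walk v w, ∀ u ∈ p.support, u ∉ X

/-- `C` is a (connected) component of `G − X`. -/
def IsCompOf (G : SimpleGraph V) (X C : Set V) : Prop :=
  ∃ v, v ∉ X ∧ C = {w | AvoidReach G X v w}

/-- A separation `(A,B)` is tight if each of `A ∖ B` and `B ∖ A` contains a component
of `G − (A ∩ B)` whose neighbourhood is all of `A ∩ B`. -/
def IsTight (s : GraphSep G) : Prop :=
  (∃ C, IsCompOf G s.sepSet C ∧ nbhd G C = s.sepSet ∧ C ⊆ s.A \ s.B) ∧
  (∃ C, IsCompOf G s.sepSet C ∧ nbhd G C = s.sepSet ∧ C ⊆ s.B \ s.A)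

/-- An orientation of `S_k`: it contains only separations of order `< k`, contains
at least one of `s, s⁻¹` for every separation of order `< k`, and contains both only
if they coincide. -/
def IsOrientation (k : ℕ∞) (P : Set (GraphSep G)) : Prop :=
  (∀ s ∈ P, s.order < k) ∧
  (∀ s : GraphSep G, s.order < k → (s ∈ P ∨ s.inv ∈ P)) ∧
  (∀ s ∈ P, s.inv ∈ P → s.inv = s)

/-- Consistency: no two members `r, s` with distinct underlying separations satisfy
`r⁻¹ ≤ s`. -/
def Consistent (P : Set (GraphSep G)) : Prop :=
  ∀ r ∈ P, ∀ s ∈ P, r.inv.le s → r = s ∨ r = s.inv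

/-- A `k`-profile: a consistent orientation of `S_k` satisfying the profile property. -/
def IsProfile (k : ℕ∞) (P : Set (GraphSep G)) : Prop :=
  IsOrientation k P ∧ Consistent P ∧ ∀ s ∈ P, ∀ t ∈ P, (s.join t).inv ∉ P

/-- A profile in `G` is a `k`-profile for some `k ∈ ℕ ∪ {ℵ₀}`. -/
def IsProfileIn (G : SimpleGraph V) (P : Set (GraphSep G)) : Prop := ∃ k : ℕ∞, IsProfile k P

/-- A profile is regular if it contains no separation of the form `(V, X)`. -/
def RegularP (P : Set (GraphSep G)) : Prop := ∀ s ∈ P, s.A ≠ Set.univ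

/-- A profile is bounded if it is a `k`-profile for some finite `k` and is not a subset
of any `ℵ₀`-profile. -/
def BoundedP (P : Set (GraphSep G)) : Prop :=
  (∃ k : ℕ, IsProfile (k : ℕ∞) P) ∧ ∀ Q : Set (GraphSep G), IsProfile ⊤ Q → ¬ P ⊆ Q

/-- `s` distinguishes the profiles `P` and `P'`. -/
def Distinguishes (s : GraphSep G) (P P' : Set (GraphSep G)) : Prop :=
  (s ∈ P ∧ s.inv ∈ P') ∨ (s.inv ∈ P ∧ s ∈ P')

/-- `s` distinguishes `P` and `P'` efficiently: it has minimum order among all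
separations distinguishing `P` and `P'`. -/
def EffDist (s : GraphSep G) (P P' : Set (GraphSep G)) : Prop :=
  Distinguishes s P P' ∧ ∀ t : GraphSep G, Distinguishes t P P' → s.order ≤ t.order

/-- `P` and `P'` are distinguishable: some finite-order separation distinguishes them. -/
def Distinguishable (P P' : Set (GraphSep G)) : Prop :=
  ∃ s : GraphSep G, s.order < ⊤ ∧ Distinguishes s P P'

/-- Robustness of a profile. -/
def RobustP (P : Set (GraphSep G)) : Prop :=
  ∀ s ∈ P, ∀ t : GraphSep G, t.order < ⊤ →
    (s.join t).order < s.order → (s.join t.inv).order < s.order →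
    (s.join t ∈ P ∨ s.join t.inv ∈ P)

/-- A `k`-profile is principal if for every vertex set `X` with `|X| < k` it contains
`(V ∖ C, C ∪ X)` for some component `C` of `G − X`. -/
def PrincipalP (k : ℕ∞) (P : Set (GraphSep G)) : Prop :=
  ∀ X : Set V, X.encard < k →
    ∃ C, IsCompOf G X C ∧ ∃ s ∈ P, s.A = Cᶜ ∧ s.B = C ∪ X

/-- `c` is a corner separation of `s` and `t`. -/
def IsCornerSep (s t c : GraphSep G) : Prop :=
  ∃ s' ∈ ({s, s.inv} : Set (GraphSep G)), ∃ t' ∈ ({t, t.inv} : Set (GraphSep G)),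
    c = s'.join t' ∨ c = (s'.join t').inv

/-- The set `S ⊆ V ∖ {x,y}` separates `x` from `y` in `G`. -/
def SeparatesIn (G : SimpleGraph V) (x y : V) (S : Set V) : Prop :=
  x ∉ S ∧ y ∉ S ∧ ∀ p : G.Walk x y, ∃ u ∈ p.support, u ∈ S

/-- `S` is a `⊆`-minimal `x`–`y`-separator in `G`. -/
def MinSeparator (G : SimpleGraph V) (x y : V) (S : Set V) : Prop :=
  SeparatesIn G x y S ∧ ∀ S' ⊆ S, SeparatesIn G x y S' → S' = S

/-- The separation of `G` induced by an (oriented) edge of a tree-decomposition. -/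
def InducedSep {ι : Type} (T : SimpleGraph ι) (𝒱 : ι → Set V) (x : GraphSep G) : Prop :=
  ∃ t t' : ι, T.Adj t t' ∧
    x.A = (⋃ u ∈ {u : ι | ∃ p : T.Walk u t, s(t, t') ∉ p.edges}, 𝒱 u) ∧
    x.B = (⋃ u ∈ {u : ι | ∃ p : T.Walk u t', s(t, t') ∉ p.edges}, 𝒱 u)

/-- Opposite pairs of corner separations of `s` and `t`. -/
def OppPair (s t c d : GraphSep G) : Prop :=
  (c = s.join t ∧ d = s.inv.join t.inv) ∨ (c = s.inv.join t.inv ∧ d = s.join t) ∨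
  (c = s.join t.inv ∧ d = s.inv.join t) ∨ (c = s.inv.join t ∧ d = s.join t.inv)

end GraphSep

namespace GraphSep

section Aux

variable {V : Type} {G : SimpleGraph V}

lemma avoidReach_refl {X : Set V} {a : V} (ha : a ∉ X) : AvoidReach G X a a :=
  ⟨SimpleGraph.Walk.nil, by
    intro u hu
    simp only [SimpleGraph.Walk.support_nil, List.mem_singleton] at hu
    subst hu; exact ha⟩

lemma avoidReach_trans {X : Set V} {a b c : V} (h1 : AvoidReach G X a b)
    (h2 : AvoidReach G X b c) : AvoidReach G X a c := by
  obtain ⟨p, hp⟩ := h1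
  obtain ⟨q, hq⟩ := h2
  exact ⟨p.append q, fun u hu => ((p.mem_support_append_iff q).1 hu).elim (hp u) (hq u)⟩

lemma avoidReach_end_not_mem {X : Set V} {a b : V} (h : AvoidReach G X a b) : b ∉ X := by
  obtain ⟨p, hp⟩ := h
  exact hp b p.end_mem_support

lemma avoidReach_adj {X : Set V} {a b c : V} (h : AvoidReach G X a b)
    (hadj : G.Adj b c) (hc : c ∉ X) : AvoidReach G X a c := by
  refine avoidReach_trans h ⟨hadj.toWalk, ?_⟩
  intro u hu
  simp only [SimpleGraph.Adj.toWalk, SimpleGraph.Walk.support_cons,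
    SimpleGraph.Walk.support_nil, List.mem_cons, List.mem_singleton,
    List.not_mem_nil, or_false] at hu
  rcases hu with rfl | rfl
  · exact avoidReach_end_not_mem h
  · exact hc

lemma walk_stay (s : GraphSep G) : ∀ {a x : V} (p : G.Walk a x),
    (∀ u ∈ p.support, u ∉ s.sepSet) → a ∈ s.A \ s.B → x ∈ s.A \ s.B := by
  intro a x p
  induction p with
  | nil => intro _ ha; exact ha
  | @cons u v w h q ih =>
    intro hp ha
    have hv : v ∉ s.sepSet :=
      hp v (by rw [SimpleGraph.Walk.support_cons]; exact List.mem_cons_of_mem _ q.start_mem_support)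
    have hvAB : v ∈ s.A \ s.B := by
      by_cases hA : v ∈ s.A
      · exact ⟨hA, fun hB => hv ⟨hA, hB⟩⟩
      · have hB : v ∈ s.B := (s.mem_A_or_B v).resolve_left hA
        exact absurd h (s.no_edge u ha v ⟨hB, hA⟩)
    exact ih (fun u hu =>
      hp u (by rw [SimpleGraph.Walk.support_cons]; exact List.mem_cons_of_mem _ hu)) hvAB

lemma avoidReach_stay (s : GraphSep G) {a x : V} (ha : a ∈ s.A \ s.B)
    (h : AvoidReach G s.sepSet a x) : x ∈ s.A \ s.B := by
  obtain ⟨p, hp⟩ := h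
  exact walk_stay s p hp ha

/-- The union of the components of `G − (A∩B)` inside `A ∖ B` none of whose vertices
has a neighbour `v` in the separator. -/
def Wset (s : GraphSep G) (v : V) : Set V :=
  {w | w ∈ s.A ∧ w ∉ s.B ∧
    ∀ x, AvoidReach G s.sepSet w x → ∀ y, G.Adj x y → y ∈ s.sepSet → y ≠ v}

lemma Wset_subset (s : GraphSep G) (v : V) : Wset s v ⊆ s.A \ s.B :=
  fun w hw => ⟨hw.1, hw.2.1⟩

lemma Wset_closed (s : GraphSep G) {v a b : V} (ha : a ∈ Wset s v) (hadj : G.Adj a b) :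
    b ∈ s.sepSet \ {v} ∨ b ∈ Wset s v := by
  have haS : a ∉ s.sepSet := fun h => ha.2.1 h.2
  have hra : AvoidReach G s.sepSet a a := avoidReach_refl haS
  by_cases hbS : b ∈ s.sepSet
  · exact Or.inl ⟨hbS, ha.2.2 a hra b hadj hbS⟩
  · have hreach : AvoidReach G s.sepSet a b := avoidReach_adj hra hadj hbS
    have hbAB : b ∈ s.A \ s.B := avoidReach_stay s ⟨ha.1, ha.2.1⟩ hreach
    exact Or.inr ⟨hbAB.1, hbAB.2,
      fun x hx y hy hyS => ha.2.2 x (avoidReach_trans hreach hx) y hy hyS⟩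

/-- The separation pointing at the components counted in `Wset s v`. -/
def uSep (s : GraphSep G) (v : V) : GraphSep G where
  A := (s.sepSet \ {v}) ∪ Wset s v
  B := (Wset s v)ᶜ
  union_eq := by
    ext x
    simp only [Set.mem_union, Set.mem_compl_iff, Set.mem_univ, iff_true]
    tauto
  no_edge := by
    rintro a ⟨haA, haB⟩ b ⟨hbB, hbA⟩ hadj
    have haW : a ∈ Wset s v := by simpa using haB
    rcases Wset_closed s haW hadj with hb | hb
    · exact hbA (Or.inl hb)
    · exact hbA (Or.inr hb)

lemma uSep_sepSet (s : GraphSep G) (v : V) : (uSep s v).sepSet = s.sepSet \ {v} := by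
  ext x
  constructor
  · rintro ⟨hA | hW, hC⟩
    · exact hA
    · exact absurd hW hC
  · intro h
    exact ⟨Or.inl h, fun hW => (Wset_subset s v hW).2 h.1.2⟩

lemma order_eq (s : GraphSep G) : s.order = s.sepSet.encard := rfl

lemma order_inv (s : GraphSep G) : s.inv.order = s.order := by
  show (s.B ∩ s.A).encard = (s.A ∩ s.B).encard
  rw [Set.inter_comm]

lemma sepSet_inv (s : GraphSep G) : s.inv.sepSet = s.sepSet := Set.inter_comm _ _

lemma inv_inv (s : GraphSep G) : s.inv.inv = s := rfl

lemma join_mem {k : ℕ∞} {P : Set (GraphSep G)} (hP : IsProfile k P)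
    {a b : GraphSep G} (ha : a ∈ P) (hb : b ∈ P) (ho : (a.join b).order < k) :
    a.join b ∈ P :=
  (hP.1.2.1 _ ho).resolve_right (hP.2.2 a ha b hb)

lemma dist_swap {P P' : Set (GraphSep G)} {t : GraphSep G}
    (h : Distinguishes t P P') : Distinguishes t P' P :=
  h.elim (fun h => Or.inr ⟨h.2, h.1⟩) (fun h => Or.inl ⟨h.2, h.1⟩)

lemma tight_side {P P' : Set (GraphSep G)} {k k' : ℕ∞}
    (hP : IsProfile k P) (hP' : IsProfile k' P')
    (hreg : RegularP P) (hreg' : RegularP P')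
    {s : GraphSep G} (hfin : s.order < ⊤)
    (heff : EffDist s P P')
    (hsP : s ∈ P) (hsP' : s.inv ∈ P') :
    ∃ C, IsCompOf G s.sepSet C ∧ nbhd G C = s.sepSet ∧ C ⊆ s.A \ s.B := by
  by_contra hno
  push_neg at hno
  have hSfin : s.sepSet.Finite := Set.encard_lt_top_iff.1 hfin
  have hk : s.sepSet.encard < k := hP.1.1 s hsP
  have hk' : s.sepSet.encard < k' := by
    have h := hP'.1.1 _ hsP'
    rwa [order_inv] at h
  -- every vertex of A \ B lies in some `Wset s v` with `v` in the separator
  have cover : ∀ w ∈ s.A \ s.B, ∃ v ∈ s.sepSet, w ∈ Wset s v := by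
    intro w hw
    have hwS : w ∉ s.sepSet := fun h => hw.2 h.2
    have hcomp : IsCompOf G s.sepSet {x | AvoidReach G s.sepSet w x} := ⟨w, hwS, rfl⟩
    have hCsub : {x | AvoidReach G s.sepSet w x} ⊆ s.A \ s.B :=
      fun x hx => avoidReach_stay s hw hx
    have hnb : nbhd G {x | AvoidReach G s.sepSet w x} ⊆ s.sepSet := by
      rintro u ⟨huC, x, hxC, hadj⟩
      by_contra huS
      exact huC (avoidReach_adj hxC hadj.symm huS)
    have hnbne : nbhd G {x | AvoidReach G s.sepSet w x} ≠ s.sepSet :=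
      fun h => hno _ hcomp h hCsub
    obtain ⟨v, hvS, hvnb⟩ : ∃ v ∈ s.sepSet, v ∉ nbhd G {x | AvoidReach G s.sepSet w x} := by
      by_contra h
      push_neg at h
      exact hnbne (Set.Subset.antisymm hnb h)
    refine ⟨v, hvS, hw.1, hw.2, ?_⟩
    intro x hx y hadj hyS
    rintro rfl
    exact hvnb ⟨fun hvC => avoidReach_end_not_mem hvC hyS, x, hx, hadj.symm⟩
  have huord : ∀ v : V, (uSep s v).order ≤ s.sepSet.encard := by
    intro v
    rw [order_eq, uSep_sepSet]
    exact Set.encard_mono Set.diff_subset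
  -- each `uSep s v` lies in `P`
  have step1 : ∀ v : V, uSep s v ∈ P := by
    intro v
    rcases hP.1.2.1 (uSep s v) (lt_of_le_of_lt (huord v) hk) with h | h
    · exact h
    exfalso
    have hjoin : s.join (uSep s v).inv ∈ P := by
      apply join_mem hP hsP h
      refine lt_of_le_of_lt (Set.encard_mono ?_) hk
      rintro x ⟨-, hxB, hxT⟩
      rcases hxT with hxS | hxW
      · exact hxS.1
      · exact absurd hxB (Wset_subset s v hxW).2
    apply hreg _ hjoin
    apply Set.eq_univ_of_forall
    intro x
    by_cases hx : x ∈ Wset s v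
    · exact Or.inl (Wset_subset s v hx).1
    · exact Or.inr hx
  -- each `uSep s v`, `v` in the separator, lies in `P'` as well, by efficiency
  have step2 : ∀ v ∈ s.sepSet, uSep s v ∈ P' := by
    intro v hv
    rcases hP'.1.2.1 (uSep s v) (lt_of_le_of_lt (huord v) hk') with h | h
    · exact h
    exfalso
    have hle := heff.2 (uSep s v) (Or.inl ⟨step1 v, h⟩)
    rw [order_eq, order_eq, uSep_sepSet] at hle
    have h2 : (s.sepSet \ {v}).encard ≠ ⊤ :=
      Set.encard_ne_top_iff.2 (hSfin.subset Set.diff_subset)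
    have hlt : (s.sepSet \ {v}).encard < s.sepSet.encard :=
      (ENat.add_one_le_iff h2).1 (le_of_eq (Set.encard_diff_singleton_add_one hv))
    exact absurd hle (not_le.2 hlt)
  -- absorb all of the `Wset`s into the `B`-side inside `P'`
  have hind : ∀ F : Set V, F.Finite → F ⊆ s.sepSet →
      ∃ j ∈ P', j.A = s.B ∪ ⋃ v ∈ F, Wset s v ∧ j.B = s.A \ ⋃ v ∈ F, Wset s v := by
    intro F hF
    refine Set.Finite.induction_on (motive := fun F _ => F ⊆ s.sepSet →
        ∃ j ∈ P', j.A = s.B ∪ ⋃ v ∈ F, Wset s v ∧ j.B = s.A \ ⋃ v ∈ F, Wset s v)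
        F hF ?_ ?_
    · intro _
      exact ⟨s.inv, hsP', by simp [inv], by simp [inv]⟩
    · intro v F hvF hFfin ih hsub
      obtain ⟨j, hjP, hjA, hjB⟩ := ih (fun x hx => hsub (Set.mem_insert_of_mem _ hx))
      have hv : v ∈ s.sepSet := hsub (Set.mem_insert _ _)
      have horder : (j.join (uSep s v)).order < k' := by
        refine lt_of_le_of_lt (Set.encard_mono ?_) hk'
        rintro x ⟨hxA, hxB, hxU⟩
        rw [hjB] at hxB
        rcases hxA with hxj | hxu
        · rw [hjA] at hxj
          rcases hxj with hxB' | hxW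
          · exact ⟨hxB.1, hxB'⟩
          · exact absurd hxW hxB.2
        · rcases hxu with hxS | hxW
          · exact hxS.1
          · exact absurd hxW hxU
      refine ⟨j.join (uSep s v), join_mem hP' hjP (step2 v hv) horder, ?_, ?_⟩
      · show j.A ∪ (uSep s v).A = _
        rw [hjA, Set.biUnion_insert]
        ext x
        constructor
        · rintro ((h | h) | (h | h))
          exacts [Or.inl h, Or.inr (Or.inr h), Or.inl h.1.2, Or.inr (Or.inl h)]
        · rintro (h | h | h)
          exacts [Or.inl (Or.inl h), Or.inr (Or.inr h), Or.inl (Or.inr h)]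
      · show j.B ∩ (uSep s v).B = _
        rw [hjB, Set.biUnion_insert]
        ext x
        constructor
        · rintro ⟨⟨hxA, hnotU⟩, hnotW⟩
          exact ⟨hxA, fun h => h.elim hnotW hnotU⟩
        · rintro ⟨hxA, h⟩
          exact ⟨⟨hxA, fun hh => h (Or.inr hh)⟩, fun hh => h (Or.inl hh)⟩
  obtain ⟨j, hjP, hjA, -⟩ := hind s.sepSet hSfin subset_rfl
  apply hreg' j hjP
  rw [hjA]
  apply Set.eq_univ_of_forall
  intro x
  by_cases hxB : x ∈ s.B
  · exact Or.inl hxB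
  · have hxA : x ∈ s.A := (s.mem_A_or_B x).resolve_right hxB
    obtain ⟨v, hv, hw⟩ := cover x ⟨hxA, hxB⟩
    exact Or.inr (Set.mem_biUnion hv hw)

end Aux

end GraphSep

open GraphSep in
/-- a finite-order separation efficiently distinguishing two distinct
regular profiles is tight. -/
theorem stmt14 {V : Type} (G : SimpleGraph V)
    (P P' : Set (GraphSep G))
    (hP : IsProfileIn G P) (hP' : IsProfileIn G P')
    (hreg : RegularP P) (hreg' : RegularP P')
    (hne : P ≠ P')
    (s : GraphSep G) (hfin : s.order < ⊤)
    (heff : EffDist s P P') :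
    IsTight s := by
  obtain ⟨k, hPk⟩ := hP
  obtain ⟨k', hP'k⟩ := hP'
  have hfin' : s.inv.order < ⊤ := by rwa [order_inv]
  rcases heff.1 with ⟨h1, h2⟩ | ⟨h1, h2⟩
  · have heff2 : EffDist s.inv P' P :=
      ⟨Or.inl ⟨h2, h1⟩, fun t ht => (order_inv s).le.trans (heff.2 t (dist_swap ht))⟩
    constructor
    · exact tight_side hPk hP'k hreg hreg' hfin heff h1 h2
    · obtain ⟨C, hC1, hC2, hC3⟩ := tight_side hP'k hPk hreg' hreg hfin' heff2 h2 h1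
      rw [sepSet_inv] at hC1 hC2
      exact ⟨C, hC1, hC2, hC3⟩
  · have heff2 : EffDist s P' P := ⟨Or.inl ⟨h2, h1⟩, fun t ht => heff.2 t (dist_swap ht)⟩
    have heff3 : EffDist s.inv P P' :=
      ⟨Or.inl ⟨h1, h2⟩, fun t ht => (order_inv s).le.trans (heff.2 t ht)⟩
    constructor
    · exact tight_side hP'k hPk hreg' hreg hfin heff2 h2 h1
    · obtain ⟨C, hC1, hC2, hC3⟩ := tight_side hPk hP'k hreg hreg' hfin' heff3 h1 h2
      rw [sepSet_inv] at hC1 hC2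
      exact ⟨C, hC1, hC2, hC3⟩
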